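/- Let α₁,…,αₙ (n ≥ 1) be nonzero complex linear forms on ℂ^ℓ, Q(z) = ∏ᵢ αᵢ(z), M = {z ∈ ℂ^ℓ : Q(z) ≠ 0}, and F = Q⁻¹(1). Then the restriction Q : M → ℂ ∖ {0} is a locally trivial fiber bundle with fiber F: for every c ∈ ℂ ∖ {0} there exist an open neighborhood U ⊆ ℂ ∖ {0} of c and a homeomorphism φ : Q⁻¹(U) → U × F such that the first coordinate of φ(z) equals Q(z) for all z ∈ Q⁻¹(U). -/

import Mathlib

/-- The restriction of `Q = ∏ i, α i` to the complement
`M = {z | Q z ≠ 0}` is a locally trivial fiber bundle over `ℂ ∖ {0}` with fiber the Milnor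
fiber `F = Q⁻¹(1)`: every nonzero `c` has an open neighborhood `U ⊆ ℂ ∖ {0}` over which
there is a trivializing homeomorphism `Q⁻¹(U) ≃ₜ U × F` whose first coordinate is `Q`. -/
theorem milnor_fibration_locally_trivial {ℓ n : ℕ} (hn : 1 ≤ n)
    (α : Fin n → ((Fin ℓ → ℂ) →ₗ[ℂ] ℂ)) (hα : ∀ i, α i ≠ 0) :
    ∀ c : ℂ, c ≠ 0 →
      ∃ U : Set ℂ, IsOpen U ∧ c ∈ U ∧ (0 : ℂ) ∉ U ∧
        ∃ φ : {z : Fin ℓ → ℂ // (∏ i, α i z) ∈ U} ≃ₜ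
            (U × {z : Fin ℓ → ℂ // (∏ i, α i z) = 1}),
          ∀ z, ((φ z).1 : ℂ) = ∏ i, α i (z : Fin ℓ → ℂ) := by
  intro c hc
  have hn0 : n ≠ 0 := Nat.one_le_iff_ne_zero.mp hn
  -- Q and its continuity
  set Q : (Fin ℓ → ℂ) → ℂ := fun z => ∏ i, α i z with hQ
  have hQcont : Continuous Q := by
    apply continuous_finset_prod
    intro i _
    exact (α i).continuous_of_finiteDimensional
  -- homogeneity
  have hQsmul : ∀ (a : ℂ) (z : Fin ℓ → ℂ), Q (a • z) = a ^ n * Q z := by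
    intro a z
    simp only [hQ, map_smul, smul_eq_mul, Finset.prod_mul_distrib,
      Finset.prod_const, Finset.card_univ, Fintype.card_fin]
  -- a fixed n-th root of c
  obtain ⟨r, hr⟩ := IsAlgClosed.exists_pow_nat_eq c (Nat.pos_of_ne_zero hn0)
  have hr0 : r ≠ 0 := by
    intro h; apply hc; rw [← hr, h, zero_pow hn0]
  -- the open set and the root function
  set U : Set ℂ := (fun u => u / c) ⁻¹' Complex.slitPlane with hU
  have hUopen : IsOpen U := Complex.isOpen_slitPlane.preimage (continuous_id.div_const c)
  have hcU : c ∈ U := by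
    simp [hU, Set.mem_preimage, div_self hc]
  have h0U : (0 : ℂ) ∉ U := by
    simp [hU, Set.mem_preimage, zero_div, Complex.slitPlane]
  set ρ : ℂ → ℂ := fun u => r * (u / c) ^ ((n : ℂ)⁻¹) with hρ
  have hρpow : ∀ u ∈ U, ρ u ^ n = u := by
    intro u hu
    have : ((u / c) ^ ((n : ℂ)⁻¹)) ^ n = u / c := Complex.cpow_nat_inv_pow _ hn0
    simp only [hρ, mul_pow, hr, this]
    field_simp
  have hρne : ∀ u ∈ U, ρ u ≠ 0 := by
    intro u hu h
    have hu0 : u ≠ 0 := fun h' => h0U (h' ▸ hu)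
    have := hρpow u hu
    rw [h, zero_pow hn0] at this
    exact hu0 this.symm
  have hρcont : ContinuousOn ρ U := by
    intro u hu
    apply ContinuousWithinAt.mono _ (Set.subset_univ U)
    rw [continuousWithinAt_univ]
    have h1 : ContinuousAt (fun x : ℂ => x / c) u := continuousAt_id.div_const c
    have hu' : u / c ∈ Complex.slitPlane := hu
    have h2 : ContinuousAt (· ^ ((n : ℂ)⁻¹)) (u / c) := continuousAt_cpow_const hu'
    exact continuousAt_const.mul (h1.cpow continuousAt_const hu')
  -- the map and its inverse
  have key : ∀ (u : ℂ), u ∈ U → ∀ (w : Fin ℓ → ℂ), Q w = 1 → Q (ρ u • w) = u := by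
    intro u hu w hw
    rw [hQsmul, hw, mul_one, hρpow u hu]
  have key2 : ∀ z : Fin ℓ → ℂ, Q z ∈ U → Q ((ρ (Q z))⁻¹ • z) = 1 := by
    intro z hz
    rw [hQsmul, inv_pow, hρpow _ hz]
    exact inv_mul_cancel₀ (fun h => h0U (h ▸ hz))
  refine ⟨U, hUopen, hcU, h0U, ?_⟩
  refine ⟨Homeomorph.mk
    { toFun := fun z => (⟨Q z.1, z.2⟩, ⟨(ρ (Q z.1))⁻¹ • z.1, key2 z.1 z.2⟩)
      invFun := fun p => ⟨ρ p.1.1 • p.2.1, by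
        rw [show (∏ i, α i (ρ p.1.1 • p.2.1)) = Q (ρ p.1.1 • p.2.1) from rfl,
          key p.1.1 p.1.2 p.2.1 p.2.2]; exact p.1.2⟩
      left_inv := by
        rintro ⟨z, hz⟩
        ext1
        simp only
        rw [smul_smul, mul_inv_cancel₀ (hρne _ hz), one_smul]
      right_inv := by
        rintro ⟨⟨u, hu⟩, ⟨w, hw⟩⟩
        have h1 : Q (ρ u • w) = u := key u hu w hw
        ext : 2
        · exact h1
        · simp only [h1, smul_smul, inv_mul_cancel₀ (hρne u hu), one_smul] }
    (by
      apply Continuous.prodMk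
      · exact Continuous.subtype_mk (hQcont.comp continuous_subtype_val) _
      · apply Continuous.subtype_mk
        apply Continuous.smul (f := fun z : {z : Fin ℓ → ℂ // (∏ i, α i z) ∈ U} => (ρ (Q z.1))⁻¹) _ continuous_subtype_val
        apply Continuous.inv₀
        · exact hρcont.comp_continuous (hQcont.comp continuous_subtype_val)
            (fun z => z.2)
        · exact fun z => hρne _ z.2)
    (by
      apply Continuous.subtype_mk
      apply Continuous.smul (f := fun p : U × {z : Fin ℓ → ℂ // (∏ i, α i z) = 1} => ρ p.1.1) _ (continuous_subtype_val.comp continuous_snd)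
      exact hρcont.comp_continuous
        ((continuous_subtype_val.comp continuous_fst))
        (fun p => p.1.2)), fun z => rfl⟩
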